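/- Let P ∈ Q be a quantum behaviour in the (2,2,2,2) Bell scenario with ⟨A₀B₀⟩ = ⟨A₀B₁⟩ = ⟨A₁B₀⟩ = α for some α ∈ [1/2, 1]. Then −⟨A₁B₁⟩ ≤ 3α − 4α³. -/

import Mathlib

open Matrix Kronecker ComplexOrder BigOperators

/-- A behaviour in the (2,2,2,2) Bell scenario: `P a b x y = P(ab|xy)`. -/
abbrev Behaviour : Type := Fin 2 → Fin 2 → Fin 2 → Fin 2 → ℝ

/-- `P` admits a quantum realisation of local dimension `d`. -/
def HasRealisation (d : ℕ) (P : Behaviour) : Prop :=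
  ∃ (ρ : Matrix (Fin d × Fin d) (Fin d × Fin d) ℂ)
    (E F : Fin 2 → Fin 2 → Matrix (Fin d) (Fin d) ℂ),
    ρ.PosSemidef ∧ ρ.trace = 1 ∧
    (∀ x a, (E x a).PosSemidef) ∧ (∀ y b, (F y b).PosSemidef) ∧
    (∀ x, ∑ a, E x a = 1) ∧ (∀ y, ∑ b, F y b = 1) ∧
    ∀ a b x y, (P a b x y : ℂ) = ((E x a ⊗ₖ F y b) * ρ).trace

def Qfinite : Set Behaviour := {P | ∃ d : ℕ, 0 < d ∧ HasRealisation d P}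

def Q : Set Behaviour := closure Qfinite

def detBehaviour (f g : Fin 2 → Fin 2) : Behaviour :=
  fun a b x y => if a = f x ∧ b = g y then 1 else 0

def L : Set Behaviour := convexHull ℝ {P | ∃ f g, P = detBehaviour f g}

def NS : Set Behaviour :=
  {P | (∀ a b x y, 0 ≤ P a b x y) ∧
       (∀ x y : Fin 2, ∑ a : Fin 2, ∑ b : Fin 2, P a b x y = 1) ∧
       (∀ (a x y y' : Fin 2), ∑ b : Fin 2, P a b x y = ∑ b : Fin 2, P a b x y') ∧
       (∀ (b x x' y : Fin 2), ∑ a : Fin 2, P a b x y = ∑ a : Fin 2, P a b x' y)}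

def margA (P : Behaviour) (x : Fin 2) : ℝ :=
  ∑ a : Fin 2, ∑ b : Fin 2, (-1 : ℝ) ^ (a : ℕ) * P a b x 0

def margB (P : Behaviour) (y : Fin 2) : ℝ :=
  ∑ a : Fin 2, ∑ b : Fin 2, (-1 : ℝ) ^ (b : ℕ) * P a b 0 y

def corr (P : Behaviour) (x y : Fin 2) : ℝ :=
  ∑ a : Fin 2, ∑ b : Fin 2, (-1 : ℝ) ^ ((a : ℕ) + (b : ℕ)) * P a b x y

def chsh (P : Behaviour) : ℝ := corr P 0 0 + corr P 0 1 + corr P 1 0 - corr P 1 1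

def bell (B P : Behaviour) : ℝ := ∑ a : Fin 2, ∑ b : Fin 2, ∑ x : Fin 2, ∑ y : Fin 2, B a b x y * P a b x y

noncomputable def beta (B : Behaviour) (S : Set Behaviour) : ℝ := sSup (bell B '' S)

def face (B : Behaviour) (S : Set Behaviour) : Set Behaviour :=
  {P ∈ S | bell B P = beta B S}

/-- Reconstruct a behaviour from marginals and correlators. -/
noncomputable def fromCorr (mA mB : Fin 2 → ℝ) (c : Fin 2 → Fin 2 → ℝ) : Behaviour :=
  fun a b x y =>
    (1 + (-1 : ℝ) ^ (a : ℕ) * mA x + (-1 : ℝ) ^ (b : ℕ) * mB y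
      + (-1 : ℝ) ^ ((a : ℕ) + (b : ℕ)) * c x y) / 4

section Helpers

variable {m n : Type*} [Fintype m] [Fintype n] [DecidableEq m] [DecidableEq n]

open scoped MatrixOrder

omit [DecidableEq m] in
lemma posSemidef_iff_eq_transpose_mul_self {A : Matrix m m ℂ} :
    A.PosSemidef ↔ ∃ X : Matrix m m ℂ, A = Xᴴ * X := by
  classical
  constructor
  · intro hA
    obtain ⟨X, hX⟩ := CStarAlgebra.nonneg_iff_eq_star_mul_self.mp hA.nonneg
    exact ⟨X, hX⟩
  · rintro ⟨X, rfl⟩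
    exact posSemidef_conjTranspose_mul_self X

omit [Fintype m] [Fintype n] [DecidableEq m] [DecidableEq n] in
lemma kron_conjT (A : Matrix m m ℂ) (B : Matrix n n ℂ) : (A ⊗ₖ B)ᴴ = Aᴴ ⊗ₖ Bᴴ := by
  ext ⟨i1,i2⟩ ⟨j1,j2⟩
  simp [conjTranspose_apply, kroneckerMap_apply, star_mul']

omit [Fintype m] [Fintype n] [DecidableEq m] [DecidableEq n] in
lemma sub_kron (A B : Matrix m m ℂ) (C : Matrix n n ℂ) :
    (A - B) ⊗ₖ C = A ⊗ₖ C - B ⊗ₖ C := by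
  ext ⟨i1,i2⟩ ⟨j1,j2⟩
  simp [kroneckerMap_apply, sub_mul]

omit [Fintype m] [Fintype n] [DecidableEq m] [DecidableEq n] in
lemma kron_sub (A : Matrix m m ℂ) (B C : Matrix n n ℂ) :
    A ⊗ₖ (B - C) = A ⊗ₖ B - A ⊗ₖ C := by
  ext ⟨i1,i2⟩ ⟨j1,j2⟩
  simp [kroneckerMap_apply, mul_sub]

lemma psd_kron {A : Matrix m m ℂ} {B : Matrix n n ℂ} (hA : A.PosSemidef) (hB : B.PosSemidef) :
    (A ⊗ₖ B).PosSemidef := by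
  obtain ⟨X, rfl⟩ := posSemidef_iff_eq_transpose_mul_self.mp hA
  obtain ⟨Y, rfl⟩ := posSemidef_iff_eq_transpose_mul_self.mp hB
  rw [Matrix.mul_kronecker_mul, ← kron_conjT]
  exact posSemidef_conjTranspose_mul_self _

omit [DecidableEq m] in
lemma psd_smul {A : Matrix m m ℂ} (hA : A.PosSemidef) {c : ℝ} (hc : 0 ≤ c) :
    (((c : ℂ)) • A).PosSemidef := by
  obtain ⟨X, rfl⟩ := posSemidef_iff_eq_transpose_mul_self.mp hA
  have h : ((c:ℂ)) • (Xᴴ * X) = (((Real.sqrt c : ℂ)) • X)ᴴ * (((Real.sqrt c : ℂ)) • X) := by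
    rw [conjTranspose_smul, smul_mul_assoc, mul_smul_comm, smul_smul]
    congr 1
    simp [Complex.conj_ofReal, ← Complex.ofReal_mul, Real.mul_self_sqrt hc]
  rw [h]
  exact posSemidef_conjTranspose_mul_self _

omit [DecidableEq m] in
lemma trace_mul_psd_nonneg {A B : Matrix m m ℂ} (hA : A.PosSemidef) (hB : B.PosSemidef) :
    0 ≤ (A * B).trace := by
  obtain ⟨X, rfl⟩ := posSemidef_iff_eq_transpose_mul_self.mp hA
  obtain ⟨Y, rfl⟩ := posSemidef_iff_eq_transpose_mul_self.mp hB
  have h0 : Xᴴ * X * (Yᴴ * Y) = (Xᴴ * X * Yᴴ) * Y := by noncomm_ring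
  have h2 : Y * (Xᴴ * X * Yᴴ) = (X * Yᴴ)ᴴ * (X * Yᴴ) := by
    rw [conjTranspose_mul, conjTranspose_conjTranspose]; noncomm_ring
  rw [h0, Matrix.trace_mul_comm, h2]
  classical
  rw [Matrix.trace]
  refine Finset.sum_nonneg fun j _ => ?_
  simp only [Matrix.diag_apply, Matrix.mul_apply, conjTranspose_apply]
  exact Finset.sum_nonneg fun i _ => star_mul_self_nonneg _

lemma one_sub_sq_psd {E0 E1 : Matrix m m ℂ} (h0 : E0.PosSemidef) (h1 : E1.PosSemidef)
    (hsum : E0 + E1 = 1) : (1 - (E0 - E1) * (E0 - E1)).PosSemidef := by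
  have hE1 : E1 = 1 - E0 := by rw [← hsum]; abel
  set S := CFC.sqrt E0 with hS
  have hSH : Sᴴ = S := (CFC.sqrt_nonneg E0).posSemidef.isHermitian
  have hSS : S * S = E0 := CFC.sqrt_mul_sqrt_self E0 h0.nonneg
  have key : 1 - (E0 - E1) * (E0 - E1) = (S + S)ᴴ * E1 * (S + S) := by
    rw [conjTranspose_add, hSH, hE1, ← hSS]
    noncomm_ring
  rw [key]
  exact h1.conjTranspose_mul_mul_same _

lemma sos_identity {d : ℕ} (A0 A1 B0 B1 : Matrix (Fin d) (Fin d) ℂ) (s : ℂ) :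
    ((4*s^2-1) • (((2*s) • (A0 ⊗ₖ 1) - (1 ⊗ₖ B0 + 1 ⊗ₖ B1)) *
                  ((2*s) • (A0 ⊗ₖ 1) - (1 ⊗ₖ B0 + 1 ⊗ₖ B1)))
     + (((2*s) • (A1 ⊗ₖ 1) - ((4*s^2-1) • (1 ⊗ₖ B0) - 1 ⊗ₖ B1)) *
        ((2*s) • (A1 ⊗ₖ 1) - ((4*s^2-1) • (1 ⊗ₖ B0) - 1 ⊗ₖ B1)))
     + (4*s^2*(4*s^2-1)) • ((1 - A0*A0) ⊗ₖ (1 : Matrix (Fin d) (Fin d) ℂ))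
     + (4*s^2) • ((1 - A1*A1) ⊗ₖ (1 : Matrix (Fin d) (Fin d) ℂ))
     + (4*s^2*(4*s^2-1)) • ((1 : Matrix (Fin d) (Fin d) ℂ) ⊗ₖ (1 - B0*B0))
     + (4*s^2) • ((1 : Matrix (Fin d) (Fin d) ℂ) ⊗ₖ (1 - B1*B1)))
    = (32*s^4) • ((1 : Matrix (Fin d) (Fin d) ℂ) ⊗ₖ (1 : Matrix (Fin d) (Fin d) ℂ))
      - (4*s*(4*s^2-1)) • (A0 ⊗ₖ B0) - (4*s*(4*s^2-1)) • (A0 ⊗ₖ B1)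
      - (4*s*(4*s^2-1)) • (A1 ⊗ₖ B0) + (4*s) • (A1 ⊗ₖ B1) := by
  simp only [sub_mul, mul_sub, add_mul, mul_add, smul_mul_assoc, mul_smul_comm,
    ← Matrix.mul_kronecker_mul, Matrix.one_mul, Matrix.mul_one, smul_smul, sub_kron, kron_sub]
  match_scalars <;> ring

end Helpers

set_option maxHeartbeats 2000000 in
lemma core_bound {d : ℕ} {P : Behaviour} (h : HasRealisation d P) {α : ℝ}
    (hα : 1/2 ≤ α) :
    (4*α^2-1) * (corr P 0 0 + corr P 0 1 + corr P 1 0) - corr P 1 1 ≤ 8*α^3 := by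
  classical
  obtain ⟨ρ, E, F, hρ, hρtr, hE, hF, hEsum, hFsum, hPr⟩ := h
  set A : Fin 2 → Matrix (Fin d) (Fin d) ℂ := fun x => E x 0 - E x 1 with hAdef
  set B : Fin 2 → Matrix (Fin d) (Fin d) ℂ := fun y => F y 0 - F y 1 with hBdef
  have hEsum' : ∀ x, E x 0 + E x 1 = 1 := by
    intro x; have := hEsum x; rwa [Fin.sum_univ_two] at this
  have hFsum' : ∀ y, F y 0 + F y 1 = 1 := by
    intro y; have := hFsum y; rwa [Fin.sum_univ_two] at this
  have hAh : ∀ x, (A x)ᴴ = A x := by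
    intro x
    simp [hAdef, conjTranspose_sub, (hE x 0).isHermitian.eq, (hE x 1).isHermitian.eq]
  have hBh : ∀ y, (B y)ᴴ = B y := by
    intro y
    simp [hBdef, conjTranspose_sub, (hF y 0).isHermitian.eq, (hF y 1).isHermitian.eq]
  have hA2 : ∀ x, (1 - A x * A x).PosSemidef := fun x =>
    one_sub_sq_psd (hE x 0) (hE x 1) (hEsum' x)
  have hB2 : ∀ y, (1 - B y * B y).PosSemidef := fun y =>
    one_sub_sq_psd (hF y 0) (hF y 1) (hFsum' y)
  -- correlators as traces
  have hTr : ∀ x y, ((A x ⊗ₖ B y) * ρ).trace = ((corr P x y : ℝ) : ℂ) := by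
    intro x y
    have expand : A x ⊗ₖ B y
        = E x 0 ⊗ₖ F y 0 - E x 0 ⊗ₖ F y 1 - (E x 1 ⊗ₖ F y 0 - E x 1 ⊗ₖ F y 1) := by
      simp only [hAdef, hBdef, sub_kron, kron_sub]
      abel
    rw [expand]
    simp only [Matrix.sub_mul, Matrix.trace_sub]
    rw [← hPr 0 0 x y, ← hPr 0 1 x y, ← hPr 1 0 x y, ← hPr 1 1 x y]
    simp [corr, Fin.sum_univ_two]
    push_cast
    ring
  set s : ℂ := (α : ℂ) with hs
  set W1 : Matrix (Fin d × Fin d) (Fin d × Fin d) ℂ :=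
    (2*s) • (A 0 ⊗ₖ 1) - (1 ⊗ₖ B 0 + 1 ⊗ₖ B 1) with hW1
  set W2 : Matrix (Fin d × Fin d) (Fin d × Fin d) ℂ :=
    (2*s) • (A 1 ⊗ₖ 1) - ((4*s^2-1) • (1 ⊗ₖ B 0) - 1 ⊗ₖ B 1) with hW2
  have hstar2s : star (2*s) = 2*s := by
    simp [hs, Complex.star_def, Complex.conj_ofReal]
  have hstar4s : star (4*s^2-1) = 4*s^2-1 := by
    simp [hs, Complex.star_def, Complex.conj_ofReal]
  have hW1h : W1ᴴ = W1 := by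
    rw [hW1, conjTranspose_sub, conjTranspose_add, conjTranspose_smul,
      kron_conjT, kron_conjT, kron_conjT, conjTranspose_one, hAh 0, hBh 0, hBh 1, hstar2s]
  have hW2h : W2ᴴ = W2 := by
    rw [hW2, conjTranspose_sub, conjTranspose_sub, conjTranspose_smul, conjTranspose_smul,
      kron_conjT, kron_conjT, kron_conjT, conjTranspose_one, hAh 1, hBh 0, hBh 1,
      hstar2s, hstar4s]
  have hlam : (0:ℝ) ≤ 4*α^2 - 1 := by nlinarith
  have hlam1 : (0:ℝ) ≤ 4*α^2*(4*α^2-1) := by nlinarith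
  have hlam2 : (0:ℝ) ≤ 4*α^2 := by nlinarith
  have hc1 : (4*s^2-1 : ℂ) = ((4*α^2-1 : ℝ) : ℂ) := by rw [hs]; push_cast; ring
  have hc2 : (4*s^2*(4*s^2-1) : ℂ) = ((4*α^2*(4*α^2-1) : ℝ) : ℂ) := by rw [hs]; push_cast; ring
  have hc3 : (4*s^2 : ℂ) = ((4*α^2 : ℝ) : ℂ) := by rw [hs]; push_cast; ring
  -- positivity of the SOS certificate
  have hW1psd : (W1 * W1).PosSemidef := by
    have e : W1 * W1 = W1ᴴ * W1 := by rw [hW1h]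
    rw [e]; exact posSemidef_conjTranspose_mul_self _
  have hW2psd : (W2 * W2).PosSemidef := by
    have e : W2 * W2 = W2ᴴ * W2 := by rw [hW2h]
    rw [e]; exact posSemidef_conjTranspose_mul_self _
  have hNpsd : ((4*s^2-1) • (W1 * W1) + W2 * W2
     + (4*s^2*(4*s^2-1)) • ((1 - A 0 * A 0) ⊗ₖ (1 : Matrix (Fin d) (Fin d) ℂ))
     + (4*s^2) • ((1 - A 1 * A 1) ⊗ₖ (1 : Matrix (Fin d) (Fin d) ℂ))
     + (4*s^2*(4*s^2-1)) • ((1 : Matrix (Fin d) (Fin d) ℂ) ⊗ₖ (1 - B 0 * B 0))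
     + (4*s^2) • ((1 : Matrix (Fin d) (Fin d) ℂ) ⊗ₖ (1 - B 1 * B 1))).PosSemidef := by
    refine Matrix.PosSemidef.add (Matrix.PosSemidef.add (Matrix.PosSemidef.add (Matrix.PosSemidef.add (Matrix.PosSemidef.add ?_ ?_) ?_) ?_) ?_) ?_
    · rw [hc1]; exact psd_smul hW1psd hlam
    · exact hW2psd
    · rw [hc2]; exact psd_smul (psd_kron (hA2 0) Matrix.PosSemidef.one) hlam1
    · rw [hc3]; exact psd_smul (psd_kron (hA2 1) Matrix.PosSemidef.one) hlam2
    · rw [hc2]; exact psd_smul (psd_kron Matrix.PosSemidef.one (hB2 0)) hlam1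
    · rw [hc3]; exact psd_smul (psd_kron Matrix.PosSemidef.one (hB2 1)) hlam2
  have htrpos := trace_mul_psd_nonneg hNpsd hρ
  rw [hW1, hW2, sos_identity (A 0) (A 1) (B 0) (B 1) s] at htrpos
  simp only [Matrix.sub_mul, Matrix.add_mul, smul_mul_assoc, Matrix.trace_sub,
    Matrix.trace_add, Matrix.trace_smul, Matrix.one_kronecker_one, Matrix.one_mul,
    hρtr, hTr, smul_eq_mul, mul_one] at htrpos
  have hreal : (32*s^4 - 4*s*(4*s^2-1) * ((corr P 0 0 : ℝ):ℂ)
      - 4*s*(4*s^2-1) * ((corr P 0 1 : ℝ):ℂ) - 4*s*(4*s^2-1) * ((corr P 1 0 : ℝ):ℂ)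
      + 4*s * ((corr P 1 1 : ℝ):ℂ))
      = ((32*α^4 - 4*α*(4*α^2-1) * corr P 0 0 - 4*α*(4*α^2-1) * corr P 0 1
          - 4*α*(4*α^2-1) * corr P 1 0 + 4*α * corr P 1 1 : ℝ) : ℂ) := by
    rw [hs]; push_cast; ring
  rw [hreal] at htrpos
  have hR : (0:ℝ) ≤ 32*α^4 - 4*α*(4*α^2-1) * corr P 0 0 - 4*α*(4*α^2-1) * corr P 0 1
      - 4*α*(4*α^2-1) * corr P 1 0 + 4*α * corr P 1 1 := by
    exact_mod_cast htrpos
  have h4 : (0:ℝ) < 4*α := by linarith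
  have hX : (4*α) * 0 ≤ (4*α) * (8*α^3 -
      ((4*α^2-1) * (corr P 0 0 + corr P 0 1 + corr P 1 0) - corr P 1 1)) := by
    nlinarith [hR]
  have := le_of_mul_le_mul_left hX h4
  linarith

lemma Q_bound {P : Behaviour} (hP : P ∈ Q) {α : ℝ} (hα : 1/2 ≤ α) :
    (4*α^2-1) * (corr P 0 0 + corr P 0 1 + corr P 1 0) - corr P 1 1 ≤ 8*α^3 := by
  have hc : ∀ x y : Fin 2, Continuous fun P : Behaviour => corr P x y := by
    intro x y
    unfold corr
    refine continuous_finset_sum _ fun a _ => continuous_finset_sum _ fun b _ => ?_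
    exact continuous_const.mul ((continuous_apply y).comp ((continuous_apply x).comp
      ((continuous_apply b).comp (continuous_apply a))))
  have hcont : Continuous (fun P : Behaviour =>
      (4*α^2-1) * (corr P 0 0 + corr P 0 1 + corr P 1 0) - corr P 1 1) :=
    (continuous_const.mul (((hc 0 0).add (hc 0 1)).add (hc 1 0))).sub (hc 1 1)
  have hclosed : IsClosed {P : Behaviour |
      (4*α^2-1) * (corr P 0 0 + corr P 0 1 + corr P 1 0) - corr P 1 1 ≤ 8*α^3} :=
    isClosed_le hcont continuous_const
  have hsub : Qfinite ⊆ {P : Behaviour |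
      (4*α^2-1) * (corr P 0 0 + corr P 0 1 + corr P 1 0) - corr P 1 1 ≤ 8*α^3} := by
    rintro P ⟨d, _, hr⟩
    exact core_bound hr hα
  exact closure_minimal hsub hclosed hP

/-- For a quantum behaviour with `⟨A₀B₀⟩ = ⟨A₀B₁⟩ = ⟨A₁B₀⟩ = α`, `α ∈ [1/2, 1]`,
one has `−⟨A₁B₁⟩ ≤ 3α − 4α³`. -/
theorem curved_boundary (P : Behaviour) (hP : P ∈ Q) (alpha : ℝ)
    (halpha : alpha ∈ Set.Icc (1 / 2 : ℝ) 1)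
    (h00 : corr P 0 0 = alpha) (h01 : corr P 0 1 = alpha) (h10 : corr P 1 0 = alpha) :
    -corr P 1 1 ≤ 3 * alpha - 4 * alpha ^ 3 := by
  have h := Q_bound hP halpha.1
  rw [h00, h01, h10] at h
  nlinarith [h]
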